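/- arXiv:1812.04176 — 2 statements merged into one kernel-verified Lean document; each statement's English description precedes it below -/
import Mathlib

section
/- There exist universal constants a5 > 0 and a6 > 0 such that the following holds. Suppose each weight matrix W_i satisfies the WDC with constant ε, A satisfies the RRIC with respect to G with constant ε, ε < 1/(16πd²)², and the noise satisfies ‖e‖ ≤ a5 · 2^{−d/2} · ‖x_*‖. Then for every nonzero x ∈ ℝ^k at which G is differentiable, ‖ṽ_x‖ ≤ (a6 · d / 2^d) · max(‖x‖, ‖x_*‖). -/
open scoped BigOperators NNReal
open Real Finset Matrix
open scoped Matrix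

noncomputable section

namespace CSGen

/-- Euclidean norm of a vector in `ℝ^m`. -/
def enorm {m : ℕ} (v : Fin m → ℝ) : ℝ := Real.sqrt (∑ i, (v i) ^ 2)

/-- Euclidean inner product. -/
def dotp {m : ℕ} (u v : Fin m → ℝ) : ℝ := ∑ i, u i * v i

/-- `relu` applied entrywise. -/
def relu {m : ℕ} (v : Fin m → ℝ) : Fin m → ℝ := fun i => max (v i) 0

/-- Zero out the rows of `W` at which the vector `v` is not positive. -/
def rowFilter {n k : ℕ} (W : Matrix (Fin n) (Fin k) ℝ) (v : Fin n → ℝ) :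
    Matrix (Fin n) (Fin k) ℝ := fun i j => if 0 < v i then W i j else 0

/-- `W_{+,x} = diag(Wx > 0) W`. -/
def posPart {n k : ℕ} (W : Matrix (Fin n) (Fin k) ℝ) (x : Fin k → ℝ) :
    Matrix (Fin n) (Fin k) ℝ := rowFilter W (W.mulVec x)

/-- Spectral norm of a matrix (operator norm w.r.t. Euclidean norms). -/
def specNorm {n k : ℕ} (M : Matrix (Fin n) (Fin k) ℝ) : ℝ :=
  ‖LinearMap.toContinuousLinearMap (Matrix.toEuclideanLin M)‖

/-- The angle `∠(x,y) = arccos(⟨x,y⟩/(‖x‖‖y‖))`. -/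
def ang {k : ℕ} (x y : Fin k → ℝ) : ℝ :=
  Real.arccos (dotp x y / (enorm x * enorm y))

/-- The matrix of the linear map `M_{x̂↔ŷ}` sending `x̂ ↦ ŷ`, `ŷ ↦ x̂`, and
`z ↦ 0` for `z ⊥ span{x,y}`. -/
def swapMat {k : ℕ} (x y : Fin k → ℝ) : Matrix (Fin k) (Fin k) ℝ :=
  let xh := (enorm x)⁻¹ • x
  let yh := (enorm y)⁻¹ • y
  let c := dotp xh yh
  if c = 1 then Matrix.vecMulVec xh xh
  else if c = -1 then -(Matrix.vecMulVec xh xh)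
  else (1 - c ^ 2)⁻¹ •
    (Matrix.vecMulVec xh yh + Matrix.vecMulVec yh xh
      - c • (Matrix.vecMulVec xh xh + Matrix.vecMulVec yh yh))

/-- The matrix `Q_{x,y}`. -/
def Qmat {k : ℕ} (x y : Fin k → ℝ) : Matrix (Fin k) (Fin k) ℝ :=
  ((π - ang x y) / (2 * π)) • (1 : Matrix (Fin k) (Fin k) ℝ)
    + (Real.sin (ang x y) / (2 * π)) • swapMat x y

/-- The Weight Distribution Condition with constant `ε`. -/
def WDC {n k : ℕ} (W : Matrix (Fin n) (Fin k) ℝ) (ε : ℝ) : Prop :=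
  ∀ x y : Fin k → ℝ, x ≠ 0 → y ≠ 0 →
    specNorm ((posPart W x)ᵀ * posPart W y - Qmat x y) ≤ ε

/-- The Range Restricted Isometry Condition of `A` with respect to `G`,
with constant `ε`. -/
def RRIC {m nd k : ℕ} (A : Matrix (Fin m) (Fin nd) ℝ)
    (G : (Fin k → ℝ) → (Fin nd → ℝ)) (ε : ℝ) : Prop :=
  ∀ x1 x2 x3 x4 : Fin k → ℝ,
    |dotp (A.mulVec (G x1 - G x2)) (A.mulVec (G x3 - G x4))
        - dotp (G x1 - G x2) (G x3 - G x4)|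
      ≤ ε * enorm (G x1 - G x2) * enorm (G x3 - G x4)

/-- Output of the `j`-th layer of the network:
`feat n W d = G = relu(W_d ⋯ relu(W_1 x) ⋯)`. -/
def feat (n : ℕ → ℕ) (W : ∀ i : ℕ, Matrix (Fin (n (i + 1))) (Fin (n i)) ℝ) :
    (j : ℕ) → (Fin (n 0) → ℝ) → (Fin (n j) → ℝ)
  | 0, x => x
  | (j + 1), x => relu ((W j).mulVec (feat n W j x))

/-- The matrix product `∏_{i=j}^{1} W_{i,+,x}`. -/
def lam (n : ℕ → ℕ) (W : ∀ i : ℕ, Matrix (Fin (n (i + 1))) (Fin (n i)) ℝ) :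
    (j : ℕ) → (Fin (n 0) → ℝ) → Matrix (Fin (n j)) (Fin (n 0)) ℝ
  | 0, _ => 1
  | (j + 1), x => rowFilter (W j) ((W j).mulVec (feat n W j x)) * lam n W j x

/-- The empirical risk `f(x) = (1/2)‖A G(x) − (A G(x_*) + e)‖²`. -/
def fobj {m : ℕ} (n : ℕ → ℕ) (W : ∀ i : ℕ, Matrix (Fin (n (i + 1))) (Fin (n i)) ℝ)
    (d : ℕ) (A : Matrix (Fin m) (Fin (n d)) ℝ) (xs : Fin (n 0) → ℝ) (e : Fin m → ℝ)
    (x : Fin (n 0) → ℝ) : ℝ :=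
  (1 / 2) * (enorm (A.mulVec (feat n W d x) - (A.mulVec (feat n W d xs) + e))) ^ 2

/-- `ṽ_x = (∏ W_{i,+,x})ᵀ Aᵀ (A (∏ W_{i,+,x}) x − y)`. -/
def vtil {m : ℕ} (n : ℕ → ℕ) (W : ∀ i : ℕ, Matrix (Fin (n (i + 1))) (Fin (n i)) ℝ)
    (d : ℕ) (A : Matrix (Fin m) (Fin (n d)) ℝ) (xs : Fin (n 0) → ℝ) (e : Fin m → ℝ)
    (x : Fin (n 0) → ℝ) : Fin (n 0) → ℝ :=
  Matrix.mulVec (lam n W d x)ᵀ (Matrix.mulVec Aᵀ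
    (A.mulVec ((lam n W d x).mulVec x) - (A.mulVec (feat n W d xs) + e)))

/-- `g(θ) = arccos((1/π)[(π−θ)cos θ + sin θ])`. -/
def gfun (θ : ℝ) : ℝ := Real.arccos ((1 / π) * ((π - θ) * Real.cos θ + Real.sin θ))

/-- `θ̄_{i,x,y}`. -/
def thetaBar {k : ℕ} (x y : Fin k → ℝ) : ℕ → ℝ
  | 0 => ang x y
  | (i + 1) => gfun (thetaBar x y i)

/-- `h̃_{x,y}` for a `d`-layer network. -/
def htil {k : ℕ} (d : ℕ) (x y : Fin k → ℝ) : Fin k → ℝ :=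
  (((2 : ℝ) ^ d)⁻¹ * ∏ i ∈ Finset.range d, (π - thetaBar x y i) / π) • y
    + (((2 : ℝ) ^ d)⁻¹ * ∑ i ∈ Finset.range d, (Real.sin (thetaBar x y i) / π)
        * ∏ j ∈ Finset.Ico (i + 1) d, (π - thetaBar x y j) / π) •
        (enorm y • (enorm x)⁻¹ • x)

/-- `h_{x,y} = 2^{−d} x − h̃_{x,y}`. -/
def hfun {k : ℕ} (d : ℕ) (x y : Fin k → ℝ) : Fin k → ℝ :=
  ((2 : ℝ) ^ d)⁻¹ • x - htil d x y

/-- `θ̌_i` with `θ̌_0 = π`. -/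
def thetaCheck : ℕ → ℝ
  | 0 => π
  | (i + 1) => gfun (thetaCheck i)

/-- `ρ_d`. -/
def rho (d : ℕ) : ℝ :=
  ∑ i ∈ Finset.range d, (Real.sin (thetaCheck i) / π)
    * ∏ j ∈ Finset.Ico (i + 1) d, (π - thetaCheck j) / π

/-- The expected risk `f^E`. -/
def fE {k : ℕ} (d : ℕ) (xs : Fin k → ℝ) (x : Fin k → ℝ) : ℝ :=
  ((2 : ℝ) ^ (d + 1))⁻¹ * dotp x x - dotp x (htil d x xs)
    + ((2 : ℝ) ^ (d + 1))⁻¹ * dotp xs xs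

/-- Closed ball of radius `r` about `z` in the Euclidean norm. -/
def cball {k : ℕ} (z : Fin k → ℝ) (r : ℝ) : Set (Fin k → ℝ) :=
  {x | enorm (x - z) ≤ r}

/-- The set `S_β`. -/
def Sset {k : ℕ} (d : ℕ) (xs : Fin k → ℝ) (β : ℝ) : Set (Fin k → ℝ) :=
  {x | x ≠ 0 ∧ enorm (hfun d x xs) ≤ ((2 : ℝ) ^ d)⁻¹ * β * max (enorm x) (enorm xs)}


/-! ### Basic vector lemmas -/

section Basic

variable {k a b : ℕ}

lemma dotp_eq_dotProduct (u v : Fin k → ℝ) : dotp u v = u ⬝ᵥ v := rfl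

lemma enorm_nonneg' (v : Fin k → ℝ) : 0 ≤ enorm v := Real.sqrt_nonneg _

lemma sum_sq_nonneg' (v : Fin k → ℝ) : 0 ≤ ∑ i, v i ^ 2 :=
  Finset.sum_nonneg fun i _ => sq_nonneg _

lemma sq_enorm (v : Fin k → ℝ) : enorm v ^ 2 = ∑ i, v i ^ 2 :=
  Real.sq_sqrt (sum_sq_nonneg' v)

lemma dotp_self (v : Fin k → ℝ) : dotp v v = enorm v ^ 2 := by
  rw [sq_enorm]
  exact Finset.sum_congr rfl fun i _ => (sq (v i)).symm

lemma enorm_zero' : enorm (0 : Fin k → ℝ) = 0 := by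
  simp [enorm]

lemma eq_zero_of_enorm_eq_zero {v : Fin k → ℝ} (h : enorm v = 0) : v = 0 := by
  have hs : ∑ i, v i ^ 2 = 0 := by
    have := Real.sqrt_eq_zero (sum_sq_nonneg' v) |>.mp h
    exact this
  funext i
  have h2 := (Finset.sum_eq_zero_iff_of_nonneg (fun j _ => sq_nonneg (v j))).mp hs i
    (Finset.mem_univ i)
  exact pow_eq_zero_iff (n := 2) (by norm_num) |>.mp h2

lemma enorm_pos_of_ne_zero {v : Fin k → ℝ} (h : v ≠ 0) : 0 < enorm v := by
  rcases lt_or_eq_of_le (enorm_nonneg' v) with h1 | h1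
  · exact h1
  · exact absurd (eq_zero_of_enorm_eq_zero h1.symm) h

lemma enorm_smul' (t : ℝ) (v : Fin k → ℝ) : enorm (t • v) = |t| * enorm v := by
  unfold enorm
  have : ∀ i, (t • v) i ^ 2 = t ^ 2 * v i ^ 2 := by
    intro i; simp [Pi.smul_apply, smul_eq_mul]; ring
  rw [Finset.sum_congr rfl fun i _ => this i, ← Finset.mul_sum,
    Real.sqrt_mul (sq_nonneg t), Real.sqrt_sq_eq_abs]

lemma abs_dotp_le (u v : Fin k → ℝ) : |dotp u v| ≤ enorm u * enorm v := by
  have h := Finset.sum_mul_sq_le_sq_mul_sq Finset.univ u v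
  calc |dotp u v| = Real.sqrt ((dotp u v) ^ 2) := (Real.sqrt_sq_eq_abs _).symm
    _ ≤ Real.sqrt ((∑ i, u i ^ 2) * (∑ i, v i ^ 2)) := Real.sqrt_le_sqrt h
    _ = enorm u * enorm v := by rw [Real.sqrt_mul (sum_sq_nonneg' u)]; rfl

lemma dotp_le (u v : Fin k → ℝ) : dotp u v ≤ enorm u * enorm v :=
  le_trans (le_abs_self _) (abs_dotp_le u v)

lemma dotp_add_right (u v w : Fin k → ℝ) : dotp u (v + w) = dotp u v + dotp u w := by
  unfold dotp; rw [← Finset.sum_add_distrib]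
  exact Finset.sum_congr rfl fun i _ => by simp [mul_add]

lemma dotp_sub_right (u v w : Fin k → ℝ) : dotp u (v - w) = dotp u v - dotp u w := by
  unfold dotp; rw [← Finset.sum_sub_distrib]
  exact Finset.sum_congr rfl fun i _ => by simp [mul_sub]

lemma dotp_smul_left (t : ℝ) (u v : Fin k → ℝ) : dotp (t • u) v = t * dotp u v := by
  unfold dotp; rw [Finset.mul_sum]
  exact Finset.sum_congr rfl fun i _ => by simp [mul_assoc]

lemma dotp_smul_right (t : ℝ) (u v : Fin k → ℝ) : dotp u (t • v) = t * dotp u v := by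
  unfold dotp; rw [Finset.mul_sum]
  exact Finset.sum_congr rfl fun i _ => by simp; ring

lemma dotp_transpose_mulVec (M : Matrix (Fin a) (Fin b) ℝ) (u : Fin b → ℝ)
    (w : Fin a → ℝ) : dotp u (Mᵀ *ᵥ w) = dotp (M *ᵥ u) w := by
  rw [dotp_eq_dotProduct, dotp_eq_dotProduct, Matrix.dotProduct_mulVec,
    Matrix.vecMul_transpose]

lemma enorm_eq_norm_eu (v : Fin a → ℝ) :
    enorm v = ‖(WithLp.toLp 2 v : EuclideanSpace ℝ (Fin a))‖ := by
  rw [EuclideanSpace.norm_eq]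
  unfold enorm
  congr 1
  exact Finset.sum_congr rfl fun i _ => by rw [Real.norm_eq_abs, sq_abs]

lemma mulVec_enorm_le (M : Matrix (Fin a) (Fin b) ℝ) (z : Fin b → ℝ) :
    enorm (M *ᵥ z) ≤ specNorm M * enorm z := by
  have h := ContinuousLinearMap.le_opNorm
    (LinearMap.toContinuousLinearMap (Matrix.toEuclideanLin M))
    (WithLp.toLp 2 z : EuclideanSpace ℝ (Fin b))
  rw [enorm_eq_norm_eu, enorm_eq_norm_eu]
  exact h

lemma abs_quadform_le (B : Matrix (Fin b) (Fin b) ℝ) (z : Fin b → ℝ) :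
    |dotp z (B *ᵥ z)| ≤ specNorm B * enorm z ^ 2 := by
  calc |dotp z (B *ᵥ z)| ≤ enorm z * enorm (B *ᵥ z) := abs_dotp_le _ _
    _ ≤ enorm z * (specNorm B * enorm z) := by
        apply mul_le_mul_of_nonneg_left (mulVec_enorm_le B z) (enorm_nonneg' z)
    _ = specNorm B * enorm z ^ 2 := by ring

end Basic

/-! ### WDC consequences -/

section WDCcons

variable {a b : ℕ}

lemma Qmat_self {f : Fin b → ℝ} (hf : f ≠ 0) :
    Qmat f f = ((1:ℝ)/2) • (1 : Matrix (Fin b) (Fin b) ℝ) := by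
  have hef : enorm f ≠ 0 := ne_of_gt (enorm_pos_of_ne_zero hf)
  have hang : ang f f = 0 := by
    unfold ang
    rw [dotp_self]
    rw [show enorm f * enorm f = enorm f ^ 2 by ring, div_self (pow_ne_zero 2 hef)]
    exact Real.arccos_one
  unfold Qmat
  rw [hang, Real.sin_zero, zero_div, zero_smul, add_zero, sub_zero,
    show π / (2 * π) = 1/2 by field_simp]

lemma wdc_quad {W : Matrix (Fin a) (Fin b) ℝ} {ε : ℝ} (hW : WDC W ε)
    {f : Fin b → ℝ} (hf : f ≠ 0) (z : Fin b → ℝ) :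
    |enorm (posPart W f *ᵥ z) ^ 2 - 1/2 * enorm z ^ 2| ≤ ε * enorm z ^ 2 := by
  have h := hW f f hf hf
  have h2 := abs_quadform_le ((posPart W f)ᵀ * posPart W f - Qmat f f) z
  rw [Qmat_self hf] at h2
  have key : dotp z (((posPart W f)ᵀ * posPart W f - ((1:ℝ)/2) • 1) *ᵥ z)
      = enorm (posPart W f *ᵥ z) ^ 2 - 1/2 * enorm z ^ 2 := by
    rw [Matrix.sub_mulVec, dotp_sub_right, Matrix.smul_mulVec, Matrix.one_mulVec,
      ← Matrix.mulVec_mulVec, dotp_transpose_mulVec, dotp_self, dotp_smul_right, dotp_self]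
  rw [key] at h2
  calc |enorm (posPart W f *ᵥ z) ^ 2 - 1/2 * enorm z ^ 2|
      ≤ specNorm ((posPart W f)ᵀ * posPart W f - Qmat f f) * enorm z ^ 2 := by
        rw [← Qmat_self hf] at h2; exact h2
    _ ≤ ε * enorm z ^ 2 := by
        apply mul_le_mul_of_nonneg_right h (sq_nonneg _)

lemma wdc_upper {W : Matrix (Fin a) (Fin b) ℝ} {ε : ℝ} (hW : WDC W ε)
    {f : Fin b → ℝ} (hf : f ≠ 0) (z : Fin b → ℝ) :
    enorm (posPart W f *ᵥ z) ≤ Real.sqrt (1/2 + ε) * enorm z := by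
  have h := wdc_quad hW hf z
  have h1 : enorm (posPart W f *ᵥ z) ^ 2 ≤ (1/2 + ε) * enorm z ^ 2 := by
    have := abs_le.mp h
    nlinarith [this.2]
  calc enorm (posPart W f *ᵥ z) = Real.sqrt (enorm (posPart W f *ᵥ z) ^ 2) := by
        rw [Real.sqrt_sq (enorm_nonneg' _)]
    _ ≤ Real.sqrt ((1/2 + ε) * enorm z ^ 2) := Real.sqrt_le_sqrt h1
    _ = Real.sqrt (1/2 + ε) * enorm z := by
        rw [Real.sqrt_mul' _ (sq_nonneg (enorm z)), Real.sqrt_sq (enorm_nonneg' z)]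

lemma wdc_lower {W : Matrix (Fin a) (Fin b) ℝ} {ε : ℝ} (hW : WDC W ε)
    {f : Fin b → ℝ} (hf : f ≠ 0) (z : Fin b → ℝ) :
    (1/2 - ε) * enorm z ^ 2 ≤ enorm (posPart W f *ᵥ z) ^ 2 := by
  have h := wdc_quad hW hf z
  have := abs_le.mp h
  nlinarith [this.1]

end WDCcons

/-! ### feat and lam lemmas -/

section FeatLam

variable {n : ℕ → ℕ} {W : ∀ i : ℕ, Matrix (Fin (n (i + 1))) (Fin (n i)) ℝ}

lemma relu_zero {b : ℕ} : relu (0 : Fin b → ℝ) = 0 := by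
  funext i; simp [relu]

lemma feat_zero (j : ℕ) : feat n W j 0 = 0 := by
  induction j with
  | zero => rfl
  | succ j ih => show relu ((W j) *ᵥ feat n W j 0) = 0; rw [ih, Matrix.mulVec_zero, relu_zero]

lemma rowFilter_mulVec {a b : ℕ} (M : Matrix (Fin a) (Fin b) ℝ) (v : Fin a → ℝ)
    (z : Fin b → ℝ) (r : Fin a) :
    (rowFilter M v *ᵥ z) r = if 0 < v r then (M *ᵥ z) r else 0 := by
  unfold rowFilter Matrix.mulVec dotProduct
  by_cases h : 0 < v r
  · simp only [h, if_true]
  · simp only [h, if_false]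
    exact Finset.sum_eq_zero fun j _ => by simp

lemma relu_mulVec {a b : ℕ} (M : Matrix (Fin a) (Fin b) ℝ) (f : Fin b → ℝ) :
    relu (M *ᵥ f) = posPart M f *ᵥ f := by
  funext r
  rw [show posPart M f = rowFilter M (M *ᵥ f) from rfl, rowFilter_mulVec]
  unfold relu
  by_cases h : 0 < (M *ᵥ f) r
  · simp [h, max_eq_left (le_of_lt h)]
  · simp [h, max_eq_right (le_of_not_gt h)]

lemma lam_mulVec_self (j : ℕ) (x : Fin (n 0) → ℝ) :
    lam n W j x *ᵥ x = feat n W j x := by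
  induction j with
  | zero => show (1 : Matrix _ _ ℝ) *ᵥ x = x; rw [Matrix.one_mulVec]
  | succ j ih =>
      show (rowFilter (W j) ((W j) *ᵥ feat n W j x) * lam n W j x) *ᵥ x
        = relu ((W j) *ᵥ feat n W j x)
      rw [← Matrix.mulVec_mulVec, ih, relu_mulVec]
      rfl

lemma feat_norm_le {ε : ℝ} {d : ℕ} (hW : ∀ i < d, WDC (W i) ε) (hε : 0 ≤ ε)
    (y : Fin (n 0) → ℝ) : ∀ j, j ≤ d →
    enorm (feat n W j y) ≤ Real.sqrt (1/2 + ε) ^ j * enorm y := by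
  intro j
  induction j with
  | zero => intro _; simp [feat]
  | succ j ih =>
      intro hj
      have hs : 0 ≤ Real.sqrt (1/2 + ε) := Real.sqrt_nonneg _
      by_cases h0 : feat n W j y = 0
      · show enorm (relu ((W j) *ᵥ feat n W j y)) ≤ _
        rw [h0, Matrix.mulVec_zero, relu_zero, enorm_zero']
        exact mul_nonneg (pow_nonneg hs _) (enorm_nonneg' _)
      · show enorm (relu ((W j) *ᵥ feat n W j y)) ≤ _
        rw [relu_mulVec]
        calc enorm (posPart (W j) (feat n W j y) *ᵥ feat n W j y)
            ≤ Real.sqrt (1/2 + ε) * enorm (feat n W j y) :=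
              wdc_upper (hW j (by omega)) h0 _
          _ ≤ Real.sqrt (1/2 + ε) * (Real.sqrt (1/2 + ε) ^ j * enorm y) := by
              apply mul_le_mul_of_nonneg_left (ih (by omega)) hs
          _ = Real.sqrt (1/2 + ε) ^ (j+1) * enorm y := by ring

lemma lam_mulVec_le {ε : ℝ} {d : ℕ} (hW : ∀ i < d, WDC (W i) ε)
    {x : Fin (n 0) → ℝ} (hfeat : ∀ l < d, feat n W l x ≠ 0)
    (u : Fin (n 0) → ℝ) : ∀ j, j ≤ d →
    enorm (lam n W j x *ᵥ u) ≤ Real.sqrt (1/2 + ε) ^ j * enorm u := by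
  intro j
  induction j with
  | zero => intro _; show enorm ((1 : Matrix _ _ ℝ) *ᵥ u) ≤ _
            rw [Matrix.one_mulVec]; simp
  | succ j ih =>
      intro hj
      have hs : 0 ≤ Real.sqrt (1/2 + ε) := Real.sqrt_nonneg _
      show enorm ((rowFilter (W j) ((W j) *ᵥ feat n W j x) * lam n W j x) *ᵥ u) ≤ _
      rw [← Matrix.mulVec_mulVec]
      calc enorm (posPart (W j) (feat n W j x) *ᵥ (lam n W j x *ᵥ u))
          ≤ Real.sqrt (1/2 + ε) * enorm (lam n W j x *ᵥ u) :=
            wdc_upper (hW j (by omega)) (hfeat j (by omega)) _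
        _ ≤ Real.sqrt (1/2 + ε) * (Real.sqrt (1/2 + ε) ^ j * enorm u) := by
            apply mul_le_mul_of_nonneg_left (ih (by omega)) hs
        _ = Real.sqrt (1/2 + ε) ^ (j+1) * enorm u := by ring

lemma lam_eq_zero {x : Fin (n 0) → ℝ} {l d : ℕ} (h : feat n W l x = 0) (hld : l < d) :
    lam n W d x = 0 := by
  have h1 : lam n W (l+1) x = 0 := by
    show rowFilter (W l) ((W l) *ᵥ feat n W l x) * lam n W l x = 0
    rw [h, Matrix.mulVec_zero]
    have : rowFilter (W l) (0 : Fin (n (l+1)) → ℝ) = 0 := by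
      funext i j'; simp [rowFilter]
    rw [this, Matrix.zero_mul]
  have h2 : ∀ j, l + 1 ≤ j → lam n W j x = 0 := by
    intro j
    induction j with
    | zero => omega
    | succ j ih =>
        intro hj
        rcases Nat.lt_or_ge (l+1) (j+1) with hlt | hge
        · have hj' : l + 1 ≤ j := by omega
          show rowFilter (W j) ((W j) *ᵥ feat n W j x) * lam n W j x = 0
          rw [ih hj', Matrix.mul_zero]
        · have : l + 1 = j + 1 := by omega
          rw [← this]; exact h1
  exact h2 d (by omega)

end FeatLam

/-! ### Directional linearization of the network -/

/-- One-sided directional rate of change of the layers along direction `u` at `x`. -/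
def phi (n : ℕ → ℕ) (W : ∀ i : ℕ, Matrix (Fin (n (i + 1))) (Fin (n i)) ℝ)
    (x u : Fin (n 0) → ℝ) : (l : ℕ) → Fin (n l) → ℝ
  | 0 => u
  | (l + 1) => fun r =>
      if 0 < ((W l) *ᵥ (feat n W l x)) r then ((W l) *ᵥ (phi n W x u l)) r
      else if ((W l) *ᵥ (feat n W l x)) r < 0 then 0
      else max (((W l) *ᵥ (phi n W x u l)) r) 0

section Phi

variable {n : ℕ → ℕ} {W : ∀ i : ℕ, Matrix (Fin (n (i + 1))) (Fin (n i)) ℝ}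

lemma phi_succ_apply (x u : Fin (n 0) → ℝ) (l : ℕ) (r : Fin (n (l+1))) :
    phi n W x u (l+1) r =
      if 0 < ((W l) *ᵥ (feat n W l x)) r then ((W l) *ᵥ (phi n W x u l)) r
      else if ((W l) *ᵥ (feat n W l x)) r < 0 then 0
      else max (((W l) *ᵥ (phi n W x u l)) r) 0 := rfl

lemma phi_zero (x : Fin (n 0) → ℝ) (l : ℕ) : phi n W x 0 l = 0 := by
  induction l with
  | zero => rfl
  | succ l ih =>
      funext r
      rw [phi_succ_apply, ih, Matrix.mulVec_zero]
      simp

lemma exists_uniform_delta {m : ℕ} (P : Fin m → ℝ → Prop)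
    (h : ∀ r, ∃ δ : ℝ, 0 < δ ∧ ∀ t : ℝ, 0 < t → t ≤ δ → P r t) :
    ∃ δ : ℝ, 0 < δ ∧ ∀ t : ℝ, 0 < t → t ≤ δ → ∀ r, P r t := by
  choose δf hpos hP using h
  rcases isEmpty_or_nonempty (Fin m) with hm | hm
  · exact ⟨1, one_pos, fun t _ _ r => (hm.false r).elim⟩
  · refine ⟨Finset.univ.inf' Finset.univ_nonempty δf, ?_, ?_⟩
    · rw [Finset.lt_inf'_iff]
      exact fun r _ => hpos r
    · intro t ht1 ht2 r
      exact hP r t ht1 (le_trans ht2 (Finset.inf'_le δf (Finset.mem_univ r)))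

lemma ray_feat (x u : Fin (n 0) → ℝ) : ∀ l, ∃ δ : ℝ, 0 < δ ∧ ∀ t : ℝ, 0 < t → t ≤ δ →
    feat n W l (x + t • u) = feat n W l x + t • phi n W x u l := by
  intro l
  induction l with
  | zero =>
      refine ⟨1, one_pos, fun t _ _ => ?_⟩
      rfl
  | succ l ih =>
      obtain ⟨δ0, hδ0, h0⟩ := ih
      have hcoord : ∀ r : Fin (n (l+1)), ∃ δ : ℝ, 0 < δ ∧ ∀ t : ℝ, 0 < t → t ≤ δ →
          max ((((W l) *ᵥ feat n W l x) r) + t * (((W l) *ᵥ phi n W x u l) r)) 0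
            = max (((W l) *ᵥ feat n W l x) r) 0 + t * phi n W x u (l+1) r := by
        intro r
        set c := ((W l) *ᵥ feat n W l x) r with hc
        set aa := ((W l) *ᵥ phi n W x u l) r with ha
        rcases lt_trichotomy 0 c with hpos | heq | hneg
        · refine ⟨c / (|aa| + 1), by positivity, fun t ht1 ht2 => ?_⟩
          have habs : 0 ≤ |aa| := abs_nonneg aa
          have h1 : t * |aa| ≤ (c / (|aa| + 1)) * |aa| :=
            mul_le_mul_of_nonneg_right ht2 habs
          have h2 : (c / (|aa| + 1)) * |aa| < c := by
            rw [div_mul_eq_mul_div, div_lt_iff₀ (by positivity)]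
            nlinarith
          have h3 : -(t * |aa|) ≤ t * aa := by
            have := mul_le_mul_of_nonneg_left (neg_abs_le aa) ht1.le
            nlinarith
          have hpos2 : 0 < c + t * aa := by nlinarith
          rw [max_eq_left hpos2.le, max_eq_left hpos.le,
            phi_succ_apply, ← hc, ← ha, if_pos hpos]
        · refine ⟨1, one_pos, fun t ht1 _ => ?_⟩
          rw [phi_succ_apply, ← hc, ← ha,
            if_neg (show ¬ (0:ℝ) < c by rw [← heq]; exact lt_irrefl 0),
            if_neg (show ¬ c < (0:ℝ) by rw [← heq]; exact lt_irrefl 0), ← heq]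
          simp only [zero_add, max_self]
          rcases le_or_gt 0 aa with h | h
          · rw [max_eq_left h, max_eq_left (mul_nonneg ht1.le h)]
          · rw [max_eq_right h.le, max_eq_right (by nlinarith : t * aa ≤ 0), mul_zero]
        · refine ⟨(-c) / (|aa| + 1), div_pos (by linarith) (by positivity), fun t ht1 ht2 => ?_⟩
          have habs : 0 ≤ |aa| := abs_nonneg aa
          have h1 : t * aa ≤ t * |aa| :=
            mul_le_mul_of_nonneg_left (le_abs_self aa) ht1.le
          have h2 : t * |aa| ≤ ((-c) / (|aa| + 1)) * |aa| :=
            mul_le_mul_of_nonneg_right ht2 habs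
          have h3 : ((-c) / (|aa| + 1)) * |aa| < -c := by
            rw [div_mul_eq_mul_div, div_lt_iff₀ (by positivity)]
            nlinarith
          have hneg2 : c + t * aa ≤ 0 := by nlinarith
          rw [max_eq_right hneg2, max_eq_right hneg.le,
            phi_succ_apply, ← hc, if_neg (by linarith : ¬ (0:ℝ) < c), if_pos hneg]
          ring
      obtain ⟨δ1, hδ1, h1⟩ := exists_uniform_delta _ hcoord
      refine ⟨min δ0 δ1, lt_min hδ0 hδ1, fun t ht1 ht2 => ?_⟩
      have ht0 : t ≤ δ0 := le_trans ht2 (min_le_left _ _)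
      have ht1' : t ≤ δ1 := le_trans ht2 (min_le_right _ _)
      show relu ((W l) *ᵥ feat n W l (x + t • u)) = _
      rw [h0 t ht1 ht0, Matrix.mulVec_add, Matrix.mulVec_smul]
      funext r
      show max (((W l) *ᵥ feat n W l x) r + t * (((W l) *ᵥ phi n W x u l) r)) 0 = _
      rw [h1 t ht1 ht1' r]
      rfl

end Phi

section PhiEqLam

variable {n : ℕ → ℕ} {W : ∀ i : ℕ, Matrix (Fin (n (i + 1))) (Fin (n i)) ℝ}

lemma phi_eq_deriv {d : ℕ} {x : Fin (n 0) → ℝ}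
    (hdiff : DifferentiableAt ℝ (feat n W d) x)
    (w : Fin (n 0) → ℝ) (hw : w ≠ 0) :
    phi n W x w d = fderiv ℝ (feat n W d) x w := by
  obtain ⟨δ, hδ, hray⟩ := ray_feat x w d
  have hD := hdiff.hasFDerivAt
  rw [hasFDerivAt_iff_tendsto] at hD
  set D := fderiv ℝ (feat n W d) x with hDdef
  have hseq : Filter.Tendsto (fun kk : ℕ => x + (δ / ((kk:ℝ)+1)) • w)
      Filter.atTop (nhds x) := by
    have h1 : Filter.Tendsto (fun kk : ℕ => δ / ((kk:ℝ)+1)) Filter.atTop (nhds 0) := by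
      have h2 := tendsto_one_div_add_atTop_nhds_zero_nat (𝕜 := ℝ)
      have h3 := h2.const_mul δ
      rw [mul_zero] at h3
      refine h3.congr fun kk => mul_one_div δ _
    have h4 := h1.smul_const w
    rw [zero_smul] at h4
    have h5 := h4.const_add x
    rw [add_zero] at h5
    exact h5
  have hcomp := hD.comp hseq
  have hval : ∀ t : ℝ, 0 < t → t ≤ δ →
      ‖x + t • w - x‖⁻¹ * ‖feat n W d (x + t • w) - feat n W d x - D (x + t • w - x)‖
      = ‖w‖⁻¹ * ‖phi n W x w d - D w‖ := by
    intro t ht htδ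
    rw [add_sub_cancel_left, hray t ht htδ]
    have h6 : feat n W d x + t • phi n W x w d - feat n W d x - D (t • w)
        = t • (phi n W x w d - D w) := by
      rw [_root_.map_smul, smul_sub]
      abel
    rw [h6, norm_smul, norm_smul, Real.norm_eq_abs, abs_of_pos ht, mul_inv]
    have h7 : t⁻¹ * ‖w‖⁻¹ * (t * ‖phi n W x w d - D w‖)
        = (t⁻¹ * t) * (‖w‖⁻¹ * ‖phi n W x w d - D w‖) := by ring
    rw [h7, inv_mul_cancel₀ (ne_of_gt ht), one_mul]
  have hcomp2 : Filter.Tendsto (fun _ : ℕ => ‖w‖⁻¹ * ‖phi n W x w d - D w‖)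
      Filter.atTop (nhds 0) := by
    refine hcomp.congr fun kk => ?_
    have hkk : (0:ℝ) < (kk:ℝ) + 1 := by positivity
    have ht : 0 < δ / ((kk:ℝ)+1) := div_pos hδ hkk
    have htδ : δ / ((kk:ℝ)+1) ≤ δ := by
      rw [div_le_iff₀ hkk]
      nlinarith
    exact hval (δ / ((kk:ℝ)+1)) ht htδ
  have hconst := tendsto_nhds_unique hcomp2 tendsto_const_nhds
  have hw0 : ‖w‖ ≠ 0 := norm_ne_zero_iff.mpr hw
  have h7 : ‖phi n W x w d - D w‖ = 0 := by
    rcases mul_eq_zero.mp hconst.symm with h | h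
    · exact absurd h (inv_ne_zero hw0)
    · exact h
  have h8 := norm_eq_zero.mp h7
  exact sub_eq_zero.mp h8

lemma phi_eq_lam {d : ℕ} {ε : ℝ} {x : Fin (n 0) → ℝ}
    (hW : ∀ i < d, WDC (W i) ε) (hε2 : ε < 1/2)
    (hfeat : ∀ l < d, feat n W l x ≠ 0)
    (hdiff : DifferentiableAt ℝ (feat n W d) x)
    (u : Fin (n 0) → ℝ) :
    phi n W x u d = lam n W d x *ᵥ u := by
  have hodd : phi n W x u d = - phi n W x (-u) d := by
    by_cases hu : u = 0
    · subst hu; rw [neg_zero, phi_zero, neg_zero]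
    · rw [phi_eq_deriv hdiff u hu, phi_eq_deriv hdiff (-u) (neg_ne_zero.mpr hu),
        map_neg, neg_neg]
  have hdown : ∀ j l, l + j = d → phi n W x u l = - phi n W x (-u) l := by
    intro j
    induction j with
    | zero =>
        intro l hl
        have hl' : l = d := by omega
        subst hl'; exact hodd
    | succ j ih =>
        intro l hl
        have h1 := ih (l+1) (by omega)
        have hld : l < d := by omega
        have hM : posPart (W l) (feat n W l x) *ᵥ (phi n W x u l + phi n W x (-u) l)
            = 0 := by
          funext r
          have h2 : phi n W x u (l+1) r = - phi n W x (-u) (l+1) r := by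
            rw [h1]; rfl
          rw [phi_succ_apply, phi_succ_apply] at h2
          show (rowFilter (W l) ((W l) *ᵥ feat n W l x) *ᵥ
            (phi n W x u l + phi n W x (-u) l)) r = 0
          rw [rowFilter_mulVec]
          by_cases hcpos : 0 < ((W l) *ᵥ feat n W l x) r
          · rw [if_pos hcpos]
            rw [if_pos hcpos, if_pos hcpos] at h2
            rw [Matrix.mulVec_add]
            show ((W l) *ᵥ phi n W x u l) r + ((W l) *ᵥ phi n W x (-u) l) r = 0
            linarith [h2]
          · rw [if_neg hcpos]
        have hz : phi n W x u l + phi n W x (-u) l = 0 := by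
          have hlow := wdc_lower (hW l hld) (hfeat l hld)
            (phi n W x u l + phi n W x (-u) l)
          rw [hM, enorm_zero'] at hlow
          have hE := enorm_nonneg' (phi n W x u l + phi n W x (-u) l)
          have h4 : enorm (phi n W x u l + phi n W x (-u) l) ≤ 0 := by
            by_contra hc
            push_neg at hc
            have h5 : 0 < (1/2 - ε) * enorm (phi n W x u l + phi n W x (-u) l) ^ 2 :=
              mul_pos (by linarith) (pow_pos hc 2)
            nlinarith
          exact eq_zero_of_enorm_eq_zero (le_antisymm h4 hE)
        exact eq_neg_of_add_eq_zero_left hz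
  have hamb : ∀ l, l < d → ∀ r : Fin (n (l+1)),
      ¬ 0 < ((W l) *ᵥ feat n W l x) r → ¬ ((W l) *ᵥ feat n W l x) r < 0 →
      max (((W l) *ᵥ phi n W x u l) r) 0 = 0 := by
    intro l hld r hc1 hc2
    have h1 := hdown (d - (l+1)) (l+1) (by omega)
    have h2 : phi n W x u (l+1) r = - phi n W x (-u) (l+1) r := by rw [h1]; rfl
    rw [phi_succ_apply, phi_succ_apply] at h2
    rw [if_neg hc1, if_neg hc2, if_neg hc1, if_neg hc2] at h2
    have h3 : (0:ℝ) ≤ max (((W l) *ᵥ phi n W x u l) r) 0 := le_max_right _ _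
    have h4 : (0:ℝ) ≤ max (((W l) *ᵥ phi n W x (-u) l) r) 0 := le_max_right _ _
    linarith
  have hup : ∀ l, l ≤ d → phi n W x u l = lam n W l x *ᵥ u := by
    intro l
    induction l with
    | zero =>
        intro _
        show u = (1 : Matrix (Fin (n 0)) (Fin (n 0)) ℝ) *ᵥ u
        rw [Matrix.one_mulVec]
    | succ l ih =>
        intro hl
        have hld : l < d := by omega
        funext r
        rw [phi_succ_apply]
        show _ = ((rowFilter (W l) ((W l) *ᵥ feat n W l x) * lam n W l x) *ᵥ u) r
        rw [← Matrix.mulVec_mulVec, rowFilter_mulVec, ← ih (by omega)]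
        by_cases hc : 0 < ((W l) *ᵥ feat n W l x) r
        · rw [if_pos hc, if_pos hc]
        · rw [if_neg hc, if_neg hc]
          by_cases hc2 : ((W l) *ᵥ feat n W l x) r < 0
          · rw [if_pos hc2]
          · rw [if_neg hc2]
            exact hamb l hld r hc hc2
  exact hup d le_rfl

end PhiEqLam

section Numeric

lemma abs_scale {δ X Y C : ℝ} (hδ : 0 < δ) (h : |δ * X - δ * Y| ≤ δ * C) :
    |X - Y| ≤ C := by
  rw [← mul_sub, abs_mul, abs_of_pos hδ] at h
  exact le_of_mul_le_mul_left h hδ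

lemma pow_half_bound {ε : ℝ} {d : ℕ} (hε0 : 0 ≤ ε) (hεd : ε * d ≤ 1/2) :
    (1/2 + ε)^d ≤ 3 * (1/2:ℝ)^d := by
  have h1 : ((1:ℝ)/2 + ε) = (1 + 2*ε) * (1/2) := by ring
  rw [h1, mul_pow]
  have h2 : (1 + 2*ε)^d ≤ 3 := by
    have h3 : (1 + 2*ε) ≤ Real.exp (2*ε) := by
      have := Real.add_one_le_exp (2*ε); linarith
    have h4 : (1 + 2*ε)^d ≤ Real.exp (2*ε)^d := pow_le_pow_left₀ (by linarith) h3 d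
    have h5 : Real.exp (2*ε)^d = Real.exp ((d:ℝ) * (2*ε)) := (Real.exp_nat_mul _ d).symm
    have h6 : (d:ℝ) * (2*ε) ≤ 1 := by nlinarith
    have h7 : Real.exp ((d:ℝ)*(2*ε)) ≤ Real.exp 1 := Real.exp_le_exp.mpr h6
    have h8 : Real.exp 1 < 3 := by
      have := Real.exp_one_lt_d9; linarith
    calc (1 + 2*ε)^d ≤ Real.exp (2*ε)^d := h4
      _ = Real.exp ((d:ℝ)*(2*ε)) := h5
      _ ≤ Real.exp 1 := h7
      _ ≤ 3 := h8.le
  have h9 : (0:ℝ) ≤ (1/2:ℝ)^d := by positivity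
  exact mul_le_mul_of_nonneg_right h2 h9

lemma rpow_half_eq (d : ℕ) : (2:ℝ) ^ ((d:ℝ)/2) = Real.sqrt 2 ^ d := by
  rw [show (d:ℝ)/2 = (1/2) * (d:ℝ) by ring, Real.rpow_mul (by norm_num : (0:ℝ) ≤ 2),
    Real.rpow_natCast, ← Real.sqrt_eq_rpow]

lemma sqrt_mix_bound {ε : ℝ} {d : ℕ} (hε0 : 0 ≤ ε) (hεd : ε * d ≤ 1/2) :
    Real.sqrt (1/2 + ε) ^ d * (Real.sqrt 2 ^ d)⁻¹ ≤ 2 * (1/2:ℝ)^d := by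
  set s := Real.sqrt (1/2 + ε) with hs
  have hβ0 : (0:ℝ) ≤ 1/2 + ε := by linarith
  have hs0 : 0 ≤ s := Real.sqrt_nonneg _
  have h20 : (0:ℝ) ≤ Real.sqrt 2 := Real.sqrt_nonneg 2
  have hP0 : 0 ≤ s ^ d * (Real.sqrt 2 ^ d)⁻¹ := by positivity
  have hQ0 : (0:ℝ) ≤ 2 * (1/2:ℝ)^d := by positivity
  have hPP : (s ^ d * (Real.sqrt 2 ^ d)⁻¹) * (s ^ d * (Real.sqrt 2 ^ d)⁻¹)
      = (1/2 + ε)^d * ((2:ℝ)^d)⁻¹ := by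
    have e1 : s ^ d * s ^ d = (1/2 + ε)^d := by
      rw [← mul_pow, Real.mul_self_sqrt hβ0]
    have e2 : Real.sqrt 2 ^ d * Real.sqrt 2 ^ d = (2:ℝ)^d := by
      rw [← mul_pow, Real.mul_self_sqrt (by norm_num : (0:ℝ) ≤ 2)]
    calc (s ^ d * (Real.sqrt 2 ^ d)⁻¹) * (s ^ d * (Real.sqrt 2 ^ d)⁻¹)
        = (s ^ d * s ^ d) * ((Real.sqrt 2 ^ d) * (Real.sqrt 2 ^ d))⁻¹ := by
          rw [mul_inv]; ring
      _ = (1/2 + ε)^d * ((2:ℝ)^d)⁻¹ := by rw [e1, e2]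
  have hQQ : (2 * (1/2:ℝ)^d) * (2 * (1/2:ℝ)^d) = 4 * ((1/2:ℝ)^d * (1/2:ℝ)^d) := by ring
  have hhalf : ((2:ℝ)^d)⁻¹ = (1/2:ℝ)^d := by
    rw [_root_.one_div_pow, one_div]
  have hmono : (s ^ d * (Real.sqrt 2 ^ d)⁻¹) * (s ^ d * (Real.sqrt 2 ^ d)⁻¹)
      ≤ (2 * (1/2:ℝ)^d) * (2 * (1/2:ℝ)^d) := by
    rw [hPP, hQQ, hhalf]
    have h1 : (1/2 + ε)^d ≤ 3 * (1/2:ℝ)^d := pow_half_bound hε0 hεd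
    have h2 : (0:ℝ) ≤ (1/2:ℝ)^d := by positivity
    nlinarith
  calc s ^ d * (Real.sqrt 2 ^ d)⁻¹
      = Real.sqrt ((s ^ d * (Real.sqrt 2 ^ d)⁻¹) * (s ^ d * (Real.sqrt 2 ^ d)⁻¹)) :=
        (Real.sqrt_mul_self hP0).symm
    _ ≤ Real.sqrt ((2 * (1/2:ℝ)^d) * (2 * (1/2:ℝ)^d)) := Real.sqrt_le_sqrt hmono
    _ = 2 * (1/2:ℝ)^d := Real.sqrt_mul_self hQ0

end Numeric

section Assemble

lemma assemble1 {P1 P2 P3 Q1 Q2 EL EG EGS EE ε : ℝ}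
    (h1 : P1 - Q1 ≤ ε * EL * EG) (h2 : -(ε * EL * EGS) ≤ P2 - Q2)
    (h3' : Q1 ≤ EL * EG) (h4' : -(EL * EGS) ≤ Q2)
    (h6' : -(2 * EL * EE) ≤ P3) :
    P1 - P2 - P3 ≤ EL * ((1 + ε) * (EG + EGS) + 2 * EE) := by nlinarith

lemma assemble2 {K1 K2 MX h ε : ℝ} (hk1 : K1 * MX ≤ 3 * h * MX)
    (hk2 : K2 * MX ≤ 2 * h * MX) (hk3 : 0 ≤ K1 * MX)
    (hε0 : 0 ≤ ε) (hε1 : ε ≤ 1) :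
    (1 + ε) * 2 * K1 * MX + 2 * K2 * MX ≤ 16 * h * MX := by nlinarith

lemma assemble3 {a b ε : ℝ} (h2 : a ^ 2 - b ^ 2 ≤ ε * b * b) (ha : 0 ≤ a) (hb : 0 ≤ b)
    (hε1 : ε ≤ 1) : a ≤ 2 * b := by
  nlinarith [sq_nonneg (a - 2*b), sq_nonneg (a + 2*b)]

lemma assemble4 {a C : ℝ} (h : a ^ 2 ≤ a * C) (h0 : 0 < a) : a ≤ C := by nlinarith

end Assemble

set_option maxHeartbeats 1000000 in
theorem statement_8 :
    ∃ a5 a6 : ℝ, 0 < a5 ∧ 0 < a6 ∧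
      ∀ (d : ℕ), 2 ≤ d → ∀ (n : ℕ → ℕ) (m : ℕ)
        (W : ∀ i : ℕ, Matrix (Fin (n (i + 1))) (Fin (n i)) ℝ)
        (A : Matrix (Fin m) (Fin (n d)) ℝ)
        (xs : Fin (n 0) → ℝ), xs ≠ 0 → ∀ (e : Fin m → ℝ) (ε : ℝ),
        (∀ i < d, WDC (W i) ε) → RRIC A (feat n W d) ε →
        ε < (1 / (16 * π * (d : ℝ) ^ 2)) ^ 2 →
        enorm e ≤ a5 * ((2 : ℝ) ^ ((d : ℝ) / 2))⁻¹ * enorm xs →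
        ∀ x : Fin (n 0) → ℝ, x ≠ 0 → DifferentiableAt ℝ (feat n W d) x →
          enorm (vtil n W d A xs e x)
            ≤ a6 * (d : ℝ) / 2 ^ d * max (enorm x) (enorm xs) := by
  refine ⟨1, 8, one_pos, by norm_num, ?_⟩
  intro d hd n m W A xs hxs e ε hW hR hε hnoise x hx hdiff
  have hπ := Real.pi_gt_three
  have hd2 : (2:ℝ) ≤ (d:ℝ) := by exact_mod_cast hd
  have hdpos : (0:ℝ) < (d:ℝ) := by linarith
  have hε0 : 0 ≤ ε := le_trans (norm_nonneg _) (hW 0 (by omega) xs xs hxs hxs)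
  have hd4 : (d:ℝ) ≤ (d:ℝ)^4 := by
    calc (d:ℝ) = (d:ℝ)^(1:ℕ) := (pow_one _).symm
      _ ≤ (d:ℝ)^(4:ℕ) := pow_le_pow_right₀ (by linarith) (by norm_num)
  have hπ2 : (9:ℝ) ≤ π^2 := by nlinarith
  have hcsq : (16 * π * (d:ℝ)^2)^2 ≥ 2304 * (d:ℝ)^4 := by
    nlinarith [mul_nonneg (by linarith : (0:ℝ) ≤ π^2 - 9) (sq_nonneg ((d:ℝ)^2))]
  have hεlt : ε < 1 / (2304 * (d:ℝ)^4) := by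
    have h2 : (1 / (16 * π * (d:ℝ)^2))^2 ≤ 1 / (2304 * (d:ℝ)^4) := by
      rw [div_pow, one_pow]
      exact one_div_le_one_div_of_le (by positivity) hcsq
    linarith
  have hεd : ε * (d:ℝ) ≤ 1/2 := by
    have h3 : (1:ℝ) / (2304 * (d:ℝ)^4) * (d:ℝ) ≤ 1/2 := by
      rw [div_mul_eq_mul_div, div_le_div_iff₀ (by positivity) (by norm_num)]
      have h5 : (0:ℝ) ≤ (d:ℝ)^4 := by positivity
      linarith
    have h4 : ε * (d:ℝ) ≤ (1 / (2304 * (d:ℝ)^4)) * (d:ℝ) :=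
      mul_le_mul_of_nonneg_right hεlt.le (by positivity)
    linarith
  have hεhalf : ε < 1/2 := by nlinarith
  have hε1 : ε ≤ 1 := by linarith
  have hMx0 : 0 ≤ max (enorm x) (enorm xs) :=
    le_trans (enorm_nonneg' x) (le_max_left _ _)
  have hRHS0 : (0:ℝ) ≤ 8 * (d:ℝ) / 2 ^ d * max (enorm x) (enorm xs) := by
    apply mul_nonneg (by positivity) hMx0
  by_cases hzero : ∃ l, l < d ∧ feat n W l x = 0
  · obtain ⟨l, hld, hl0⟩ := hzero
    have hlam := lam_eq_zero (W := W) hl0 hld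
    have hv0 : vtil n W d A xs e x = 0 := by
      unfold vtil
      rw [hlam, Matrix.transpose_zero, Matrix.zero_mulVec]
    rw [hv0, enorm_zero']
    exact hRHS0
  · push_neg at hzero
    have hfm : ∀ l, l < d → feat n W l x ≠ 0 := hzero
    have hphieq := phi_eq_lam hW hεhalf hfm hdiff (vtil n W d A xs e x)
    obtain ⟨δ, hδ, hray⟩ := ray_feat (n := n) (W := W) x (vtil n W d A xs e x) d
    have hXd : feat n W d (x + δ • vtil n W d A xs e x) - feat n W d x
        = δ • (lam n W d x *ᵥ vtil n W d A xs e x) := by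
      rw [hray δ hδ le_rfl, hphieq, add_sub_cancel_left]
    have hG0 : feat n W d (0 : Fin (n 0) → ℝ) = 0 := feat_zero d
    have hR1 := hR (x + δ • vtil n W d A xs e x) x x 0
    have hR2 := hR (x + δ • vtil n W d A xs e x) x xs 0
    have hR3 := hR (x + δ • vtil n W d A xs e x) x (x + δ • vtil n W d A xs e x) x
    rw [hXd, hG0, sub_zero] at hR1 hR2
    rw [hXd] at hR3
    simp only [Matrix.mulVec_smul, dotp_smul_left, dotp_smul_right, enorm_smul',
      abs_of_pos hδ] at hR1 hR2 hR3
    have hd1 : |dotp (A *ᵥ (lam n W d x *ᵥ vtil n W d A xs e x)) (A *ᵥ feat n W d x)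
        - dotp (lam n W d x *ᵥ vtil n W d A xs e x) (feat n W d x)|
        ≤ ε * enorm (lam n W d x *ᵥ vtil n W d A xs e x) * enorm (feat n W d x) :=
      abs_scale hδ (hR1.trans_eq (by ring))
    have hd2' : |dotp (A *ᵥ (lam n W d x *ᵥ vtil n W d A xs e x)) (A *ᵥ feat n W d xs)
        - dotp (lam n W d x *ᵥ vtil n W d A xs e x) (feat n W d xs)|
        ≤ ε * enorm (lam n W d x *ᵥ vtil n W d A xs e x) * enorm (feat n W d xs) :=
      abs_scale hδ (hR2.trans_eq (by ring))
    have hd3 : |dotp (A *ᵥ (lam n W d x *ᵥ vtil n W d A xs e x)) (A *ᵥ (lam n W d x *ᵥ vtil n W d A xs e x))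
        - dotp (lam n W d x *ᵥ vtil n W d A xs e x) (lam n W d x *ᵥ vtil n W d A xs e x)|
        ≤ ε * enorm (lam n W d x *ᵥ vtil n W d A xs e x) * enorm (lam n W d x *ᵥ vtil n W d A xs e x) :=
      abs_scale hδ (abs_scale hδ (hR3.trans_eq (by ring)))
    have hALv : enorm (A *ᵥ (lam n W d x *ᵥ vtil n W d A xs e x)) ≤ 2 * enorm (lam n W d x *ᵥ vtil n W d A xs e x) := by
      have h2 := (abs_le.mp hd3).2
      rw [dotp_self, dotp_self] at h2
      exact assemble3 (by linarith) (enorm_nonneg' _) (enorm_nonneg' _) hε1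
    have hvv0 : dotp (vtil n W d A xs e x) (vtil n W d A xs e x)
        = dotp (lam n W d x *ᵥ vtil n W d A xs e x)
            (Aᵀ *ᵥ (A *ᵥ (lam n W d x *ᵥ x) - (A *ᵥ feat n W d xs + e))) :=
      dotp_transpose_mulVec _ _ _
    have hvv : dotp (vtil n W d A xs e x) (vtil n W d A xs e x)
        = dotp (A *ᵥ (lam n W d x *ᵥ vtil n W d A xs e x)) (A *ᵥ feat n W d x)
          - dotp (A *ᵥ (lam n W d x *ᵥ vtil n W d A xs e x)) (A *ᵥ feat n W d xs)
          - dotp (A *ᵥ (lam n W d x *ᵥ vtil n W d A xs e x)) e := by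
      rw [hvv0, lam_mulVec_self, dotp_transpose_mulVec, dotp_sub_right, dotp_add_right]
      ring
    have hstep1 : enorm (vtil n W d A xs e x) ^ 2
        ≤ enorm (lam n W d x *ᵥ vtil n W d A xs e x) * ((1 + ε) * (enorm (feat n W d x) + enorm (feat n W d xs)) + 2 * enorm e) := by
      have h1 := (abs_le.mp hd1).2
      have h2 := (abs_le.mp hd2').1
      have h3' := (abs_le.mp (abs_dotp_le (lam n W d x *ᵥ vtil n W d A xs e x) (feat n W d x))).2
      have h4' := (abs_le.mp (abs_dotp_le (lam n W d x *ᵥ vtil n W d A xs e x) (feat n W d xs))).1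
      have h6 : |dotp (A *ᵥ (lam n W d x *ᵥ vtil n W d A xs e x)) e| ≤ 2 * enorm (lam n W d x *ᵥ vtil n W d A xs e x) * enorm e := by
        calc |dotp (A *ᵥ (lam n W d x *ᵥ vtil n W d A xs e x)) e| ≤ enorm (A *ᵥ (lam n W d x *ᵥ vtil n W d A xs e x)) * enorm e := abs_dotp_le _ _
          _ ≤ 2 * enorm (lam n W d x *ᵥ vtil n W d A xs e x) * enorm e :=
            mul_le_mul_of_nonneg_right hALv (enorm_nonneg' e)
      have h6' := (abs_le.mp h6).1
      rw [dotp_self] at hvv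
      rw [hvv]
      exact assemble1 h1 h2 h3' h4' h6'
    have hELb : enorm (lam n W d x *ᵥ vtil n W d A xs e x) ≤ Real.sqrt (1/2 + ε) ^ d * enorm (vtil n W d A xs e x) :=
      lam_mulVec_le hW hfm (vtil n W d A xs e x) d le_rfl
    have hsd0 : (0:ℝ) ≤ Real.sqrt (1/2 + ε) ^ d := by positivity
    have hEGb : enorm (feat n W d x) ≤ Real.sqrt (1/2 + ε) ^ d * max (enorm x) (enorm xs) := by
      calc enorm (feat n W d x) ≤ Real.sqrt (1/2 + ε) ^ d * enorm x := feat_norm_le hW hε0 x d le_rfl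
        _ ≤ Real.sqrt (1/2 + ε) ^ d * max (enorm x) (enorm xs) :=
            mul_le_mul_of_nonneg_left (le_max_left _ _) hsd0
    have hEGSb : enorm (feat n W d xs) ≤ Real.sqrt (1/2 + ε) ^ d * max (enorm x) (enorm xs) := by
      calc enorm (feat n W d xs) ≤ Real.sqrt (1/2 + ε) ^ d * enorm xs := feat_norm_le hW hε0 xs d le_rfl
        _ ≤ Real.sqrt (1/2 + ε) ^ d * max (enorm x) (enorm xs) :=
            mul_le_mul_of_nonneg_left (le_max_right _ _) hsd0
    have hEEb : enorm e ≤ (Real.sqrt 2 ^ d)⁻¹ * max (enorm x) (enorm xs) := by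
      rw [rpow_half_eq d] at hnoise
      calc enorm e ≤ 1 * (Real.sqrt 2 ^ d)⁻¹ * enorm xs := hnoise
        _ = (Real.sqrt 2 ^ d)⁻¹ * enorm xs := by ring
        _ ≤ (Real.sqrt 2 ^ d)⁻¹ * max (enorm x) (enorm xs) := by
            apply mul_le_mul_of_nonneg_left (le_max_right _ _)
            positivity
    have hkey1 : Real.sqrt (1/2 + ε) ^ d * Real.sqrt (1/2 + ε) ^ d ≤ 3 * (1/2:ℝ)^d := by
      rw [← mul_pow, Real.mul_self_sqrt (by linarith : (0:ℝ) ≤ 1/2 + ε)]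
      exact pow_half_bound hε0 hεd
    have hkey2 : Real.sqrt (1/2 + ε) ^ d * (Real.sqrt 2 ^ d)⁻¹ ≤ 2 * (1/2:ℝ)^d :=
      sqrt_mix_bound hε0 hεd
    have hhalf0 : (0:ℝ) ≤ (1/2:ℝ)^d := by positivity
    have hbig : enorm (vtil n W d A xs e x) ^ 2
        ≤ enorm (vtil n W d A xs e x) * (16 * (1/2:ℝ)^d * max (enorm x) (enorm xs)) := by
      have h7 : (1 + ε) * (enorm (feat n W d x) + enorm (feat n W d xs)) + 2 * enorm e
          ≤ (1 + ε) * (Real.sqrt (1/2 + ε) ^ d * max (enorm x) (enorm xs) + Real.sqrt (1/2 + ε) ^ d * max (enorm x) (enorm xs))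
            + 2 * ((Real.sqrt 2 ^ d)⁻¹ * max (enorm x) (enorm xs)) := by
        have h8 := mul_le_mul_of_nonneg_left (add_le_add hEGb hEGSb)
          (by linarith : (0:ℝ) ≤ 1 + ε)
        have h9 := mul_le_mul_of_nonneg_left hEEb (by norm_num : (0:ℝ) ≤ 2)
        linarith
      have h10 : 0 ≤ (1 + ε) * (enorm (feat n W d x) + enorm (feat n W d xs)) + 2 * enorm e := by
        have ha := mul_nonneg (by linarith : (0:ℝ) ≤ 1 + ε)
          (add_nonneg (enorm_nonneg' (feat n W d x)) (enorm_nonneg' (feat n W d xs)))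
        have hb := enorm_nonneg' e
        linarith
      have h11 : enorm (lam n W d x *ᵥ vtil n W d A xs e x) * ((1 + ε) * (enorm (feat n W d x) + enorm (feat n W d xs)) + 2 * enorm e)
          ≤ (Real.sqrt (1/2 + ε) ^ d * enorm (vtil n W d A xs e x))
            * ((1 + ε) * (Real.sqrt (1/2 + ε) ^ d * max (enorm x) (enorm xs) + Real.sqrt (1/2 + ε) ^ d * max (enorm x) (enorm xs))
              + 2 * ((Real.sqrt 2 ^ d)⁻¹ * max (enorm x) (enorm xs))) :=
        mul_le_mul hELb h7 h10 (mul_nonneg hsd0 (enorm_nonneg' _))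
      have h12 : (Real.sqrt (1/2 + ε) ^ d * enorm (vtil n W d A xs e x))
            * ((1 + ε) * (Real.sqrt (1/2 + ε) ^ d * max (enorm x) (enorm xs) + Real.sqrt (1/2 + ε) ^ d * max (enorm x) (enorm xs))
              + 2 * ((Real.sqrt 2 ^ d)⁻¹ * max (enorm x) (enorm xs)))
          = enorm (vtil n W d A xs e x) * ((1 + ε) * 2 * (Real.sqrt (1/2 + ε) ^ d * Real.sqrt (1/2 + ε) ^ d) * max (enorm x) (enorm xs)
              + 2 * (Real.sqrt (1/2 + ε) ^ d * (Real.sqrt 2 ^ d)⁻¹) * max (enorm x) (enorm xs)) := by ring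
      have h13 : (1 + ε) * 2 * (Real.sqrt (1/2 + ε) ^ d * Real.sqrt (1/2 + ε) ^ d) * max (enorm x) (enorm xs)
              + 2 * (Real.sqrt (1/2 + ε) ^ d * (Real.sqrt 2 ^ d)⁻¹) * max (enorm x) (enorm xs)
          ≤ 16 * (1/2:ℝ)^d * max (enorm x) (enorm xs) := by
        have hk1 := mul_le_mul_of_nonneg_right hkey1 hMx0
        have hk2 := mul_le_mul_of_nonneg_right hkey2 hMx0
        have hk3 : 0 ≤ (Real.sqrt (1/2 + ε) ^ d * Real.sqrt (1/2 + ε) ^ d) * max (enorm x) (enorm xs) :=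
          mul_nonneg (mul_nonneg hsd0 hsd0) hMx0
        exact assemble2 hk1 hk2 hk3 hε0 hε1
      calc enorm (vtil n W d A xs e x) ^ 2
          ≤ enorm (lam n W d x *ᵥ vtil n W d A xs e x) * ((1 + ε) * (enorm (feat n W d x) + enorm (feat n W d xs)) + 2 * enorm e) := hstep1
        _ ≤ _ := h11
        _ = enorm (vtil n W d A xs e x) * ((1 + ε) * 2 * (Real.sqrt (1/2 + ε) ^ d * Real.sqrt (1/2 + ε) ^ d) * max (enorm x) (enorm xs)
              + 2 * (Real.sqrt (1/2 + ε) ^ d * (Real.sqrt 2 ^ d)⁻¹) * max (enorm x) (enorm xs)) := h12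
        _ ≤ enorm (vtil n W d A xs e x) * (16 * (1/2:ℝ)^d * max (enorm x) (enorm xs)) :=
            mul_le_mul_of_nonneg_left h13 (enorm_nonneg' _)
    have hfin : enorm (vtil n W d A xs e x) ≤ 16 * (1/2:ℝ)^d * max (enorm x) (enorm xs) := by
      rcases eq_or_lt_of_le (enorm_nonneg' (vtil n W d A xs e x)) with h0 | h0
      · rw [← h0]
        exact mul_nonneg (by positivity) hMx0
      · exact assemble4 hbig h0
    calc enorm (vtil n W d A xs e x) ≤ 16 * (1/2:ℝ)^d * max (enorm x) (enorm xs) := hfin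
      _ ≤ 8 * (d:ℝ) / 2 ^ d * max (enorm x) (enorm xs) := by
          apply mul_le_mul_of_nonneg_right ?_ hMx0
          rw [show ((1:ℝ)/2)^d = ((2:ℝ)^d)⁻¹ by
            rw [_root_.one_div_pow, one_div], div_eq_mul_inv]
          have h2d0 : (0:ℝ) ≤ ((2:ℝ)^d)⁻¹ := by positivity
          have h16 : (16:ℝ) ≤ 8 * (d:ℝ) := by linarith
          exact mul_le_mul_of_nonneg_right h16 h2d0
end CSGen
end
end

section
/- There exists a universal constant a7 > 0 such that for all integers d ≥ 2, 1/(a7 (d + 2)²) ≤ 1 − ρ_d ≤ 250/(d + 1). Consequently, the infimum a8 = inf_{d ≥ 2} ρ_d is strictly positive. -/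
open scoped BigOperators NNReal
open Real Finset Matrix
open scoped Matrix

noncomputable section

namespace CSGen

/-! ### Auxiliary development for `statement_12` -/

/-- `Y_d = 1 - cos θ̌_d`. -/
noncomputable def Yv (d : ℕ) : ℝ := 1 - Real.cos (thetaCheck d)

lemma tc_nonneg (d : ℕ) : 0 ≤ thetaCheck d := by
  cases d with
  | zero => exact Real.pi_pos.le
  | succ n => exact Real.arccos_nonneg _

lemma tc_le_pi (d : ℕ) : thetaCheck d ≤ π := by
  cases d with
  | zero => exact le_rfl
  | succ n => exact Real.arccos_le_pi _

lemma vmem {θ : ℝ} (h0 : 0 ≤ θ) (h1 : θ ≤ π) :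
    -1 ≤ (1 / π) * ((π - θ) * Real.cos θ + Real.sin θ) ∧
      (1 / π) * ((π - θ) * Real.cos θ + Real.sin θ) ≤ 1 := by
  have hπ : 0 < π := Real.pi_pos
  have hs : Real.sin θ ≤ θ := Real.sin_le h0
  have hs0 : 0 ≤ Real.sin θ := Real.sin_nonneg_of_nonneg_of_le_pi h0 h1
  have hc1 : Real.cos θ ≤ 1 := Real.cos_le_one θ
  have hcm : -1 ≤ Real.cos θ := Real.neg_one_le_cos θ
  have hπθ : 0 ≤ π - θ := by linarith
  have hub : (π - θ) * Real.cos θ + Real.sin θ ≤ π := by nlinarith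
  have hlb : -π ≤ (π - θ) * Real.cos θ + Real.sin θ := by nlinarith
  constructor
  · rw [neg_le, ← mul_neg]
    calc (1 / π) * (-((π - θ) * Real.cos θ + Real.sin θ)) ≤ (1 / π) * π := by
          apply mul_le_mul_of_nonneg_left (by linarith) (by positivity)
    _ = 1 := by field_simp
  · calc (1 / π) * ((π - θ) * Real.cos θ + Real.sin θ) ≤ (1 / π) * π := by
          apply mul_le_mul_of_nonneg_left hub (by positivity)
    _ = 1 := by field_simp

lemma cos_tc_succ (d : ℕ) :
    Real.cos (thetaCheck (d + 1)) =
      (1 / π) * ((π - thetaCheck d) * Real.cos (thetaCheck d) + Real.sin (thetaCheck d)) := by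
  have h := vmem (tc_nonneg d) (tc_le_pi d)
  show Real.cos (gfun (thetaCheck d)) = _
  unfold gfun
  exact Real.cos_arccos h.1 h.2

lemma tc_one : thetaCheck 1 = π / 2 := by
  show gfun π = π / 2
  unfold gfun
  rw [Real.sin_pi, sub_self, zero_mul, zero_add, mul_zero, Real.arccos_zero]

lemma rho_succ (d : ℕ) :
    rho (d + 1) = rho d * ((π - thetaCheck d) / π) + Real.sin (thetaCheck d) / π := by
  unfold rho
  rw [Finset.sum_range_succ, Finset.Ico_self, Finset.prod_empty, mul_one, Finset.sum_mul]
  congr 1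
  refine Finset.sum_congr rfl fun i hi => ?_
  rw [Finset.prod_Ico_succ_top (Nat.succ_le_of_lt (Finset.mem_range.1 hi))]
  ring

lemma rho_eq_cos : ∀ d : ℕ, 1 ≤ d → rho d = Real.cos (thetaCheck d) := by
  have hπ : (0:ℝ) < π := Real.pi_pos
  intro d hd
  induction d, hd using Nat.le_induction with
  | base =>
      rw [rho_succ 0, tc_one, Real.cos_pi_div_two]
      show (0:ℝ) * _ + Real.sin (π) / π = 0
      rw [Real.sin_pi]
      ring
  | succ n hn ih =>
      rw [rho_succ n, ih, cos_tc_succ n]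
      field_simp

/-- `sin θ ≥ θ - (3/16)θ³` on `(0, π/2]`. -/
lemma sin_lb {θ : ℝ} (h0 : 0 < θ) (h2 : θ ≤ π / 2) : θ - 3 / 16 * θ ^ 3 ≤ Real.sin θ := by
  have hπ : π < 3.15 := Real.pi_lt_d2
  have ht0 : 0 < θ / 2 := by linarith
  have ht1 : θ / 2 ≤ 1 := by linarith
  have hsin : θ / 2 - (θ / 2) ^ 3 / 4 ≤ Real.sin (θ / 2) :=
    by have := Real.sin_gt_sub_cube ht0; nlinarith [pow_pos ht0 3]
  have hcos : 1 - (θ / 2) ^ 2 / 2 ≤ Real.cos (θ / 2) := Real.one_sub_sq_div_two_le_cos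
  have hsp : 0 ≤ θ / 2 - (θ / 2) ^ 3 / 4 := by nlinarith
  have hcp : 0 ≤ 1 - (θ / 2) ^ 2 / 2 := by nlinarith
  have h2t : Real.sin θ = 2 * Real.sin (θ / 2) * Real.cos (θ / 2) := by
    have h := Real.sin_two_mul (θ / 2)
    rw [show 2 * (θ / 2) = θ by ring] at h
    exact h
  rw [h2t]
  nlinarith [mul_le_mul hsin hcos hcp (Real.sin_nonneg_of_nonneg_of_le_pi ht0.le
    (by linarith)), sq_nonneg θ, pow_pos h0 3, pow_pos h0 5]

/-- `cos θ ≤ 1 - 2 (θ/2 - (θ/2)³/4)²` on `(0, π/2]`, whence the two bounds below. -/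
lemma cos_half_ub {θ : ℝ} (h0 : 0 < θ) (h2 : θ ≤ π / 2) :
    Real.cos θ ≤ 1 - 2 * (θ / 2 - (θ / 2) ^ 3 / 4) ^ 2 := by
  have hπ : π < 3.15 := Real.pi_lt_d2
  have ht0 : 0 < θ / 2 := by linarith
  have ht1 : θ / 2 ≤ 1 := by linarith
  have hsin : θ / 2 - (θ / 2) ^ 3 / 4 ≤ Real.sin (θ / 2) :=
    by have := Real.sin_gt_sub_cube ht0; nlinarith [pow_pos ht0 3]
  have hsp : 0 ≤ θ / 2 - (θ / 2) ^ 3 / 4 := by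
    have h3 : (θ / 2) ^ 3 ≤ (θ / 2) ^ 1 := pow_le_pow_of_le_one ht0.le ht1 (by norm_num)
    simp only [pow_one] at h3
    linarith
  have hid : Real.sin (θ / 2) ^ 2 = 1 / 2 - Real.cos θ / 2 := by
    have := Real.sin_sq_eq_half_sub (θ / 2)
    rwa [show 2 * (θ / 2) = θ by ring] at this
  nlinarith [pow_le_pow_left₀ hsp hsin 2]

/-- `sin θ - θ cos θ ≥ (3/20) θ³` on `(0, π/2]`. -/
lemma delta_lb {θ : ℝ} (h0 : 0 < θ) (h2 : θ ≤ π / 2) :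
    3 / 20 * θ ^ 3 ≤ Real.sin θ - θ * Real.cos θ := by
  have hπ : π < 3.15 := Real.pi_lt_d2
  have h1 := sin_lb h0 h2
  have h3 := cos_half_ub h0 h2
  have hθ2 : θ ^ 2 ≤ 2.480625 := by nlinarith
  nlinarith [pow_pos h0 3, pow_pos h0 5, pow_pos h0 7]

/-- `sin θ - θ cos θ ≤ θ³/2` for `θ ≥ 0`. -/
lemma delta_ub {θ : ℝ} (h0 : 0 ≤ θ) : Real.sin θ - θ * Real.cos θ ≤ θ ^ 3 / 2 := by
  have h1 : Real.sin θ ≤ θ := Real.sin_le h0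
  have h2 : 1 - θ ^ 2 / 2 ≤ Real.cos θ := Real.one_sub_sq_div_two_le_cos
  nlinarith

/-- `1 - cos θ ≥ (7/20) θ²` on `(0, π/2]`. -/
lemma y_lb {θ : ℝ} (h0 : 0 < θ) (h2 : θ ≤ π / 2) : 7 / 20 * θ ^ 2 ≤ 1 - Real.cos θ := by
  have hπ : π < 3.15 := Real.pi_lt_d2
  have h3 := cos_half_ub h0 h2
  have hθ2 : θ ^ 2 ≤ 2.480625 := by nlinarith
  have hu : (θ / 2) ^ 2 ≤ 0.62016 := by nlinarith
  nlinarith [sq_nonneg θ, pow_pos h0 4, pow_pos h0 6,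
    mul_nonneg (by nlinarith : (0:ℝ) ≤ 0.62016 - (θ/2)^2)
      (by nlinarith : (0:ℝ) ≤ 7.7 - (θ/2)^2)]

/-- `1 - cos θ ≤ θ²/2`. -/
lemma y_ub (θ : ℝ) : 1 - Real.cos θ ≤ θ ^ 2 / 2 := by
  have := Real.one_sub_sq_div_two_le_cos (x := θ); linarith

lemma gfun_mem {θ : ℝ} (h0 : 0 < θ) (h2 : θ ≤ π / 2) : 0 < gfun θ ∧ gfun θ ≤ θ := by
  have hπ : 0 < π := Real.pi_pos
  have hθπ : θ ≤ π := by linarith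
  have hv := vmem h0.le hθπ
  have hcg : Real.cos (gfun θ) = (1 / π) * ((π - θ) * Real.cos θ + Real.sin θ) := by
    unfold gfun; exact Real.cos_arccos hv.1 hv.2
  have hv1 : (1 / π) * ((π - θ) * Real.cos θ + Real.sin θ) < 1 := by
    have hs : Real.sin θ < θ := Real.sin_lt h0
    have hc1 : Real.cos θ ≤ 1 := Real.cos_le_one θ
    have hπθ : 0 ≤ π - θ := by linarith
    have hub : (π - θ) * Real.cos θ + Real.sin θ < π := by nlinarith
    calc (1 / π) * ((π - θ) * Real.cos θ + Real.sin θ) < (1 / π) * π := by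
          apply mul_lt_mul_of_pos_left hub (by positivity)
    _ = 1 := by field_simp
  constructor
  · unfold gfun; exact Real.arccos_pos.2 hv1
  · by_contra hcon
    push_neg at hcon
    have hcc : Real.cos (gfun θ) ≤ Real.cos θ :=
      Real.cos_le_cos_of_nonneg_of_le_pi h0.le (by unfold gfun; exact Real.arccos_le_pi _)
        hcon.le
    have hd := delta_lb h0 h2
    have : Real.cos θ < Real.cos (gfun θ) := by
      rw [hcg]
      have h3 : 0 < 3 / 20 * θ ^ 3 := by positivity
      have : Real.cos θ = (1 / π) * ((π - θ) * Real.cos θ + θ * Real.cos θ) := by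
        field_simp; ring
      rw [this]
      apply mul_lt_mul_of_pos_left _ (by positivity)
      nlinarith
    linarith

lemma tc_prop : ∀ d : ℕ, 1 ≤ d → 0 < thetaCheck d ∧ thetaCheck d ≤ π / 2 := by
  intro d hd
  induction d, hd using Nat.le_induction with
  | base => rw [tc_one]; exact ⟨by positivity, le_rfl⟩
  | succ n hn ih =>
      have h := gfun_mem ih.1 ih.2
      exact ⟨h.1, h.2.trans ih.2⟩

lemma Yv_nonneg (d : ℕ) : 0 ≤ Yv d := by
  have := Real.cos_le_one (thetaCheck d); unfold Yv; linarith

lemma Yv_succ (d : ℕ) :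
    Yv (d + 1) = Yv d -
      (Real.sin (thetaCheck d) - thetaCheck d * Real.cos (thetaCheck d)) / π := by
  have hπ : (0:ℝ) < π := Real.pi_pos
  unfold Yv
  rw [cos_tc_succ d]
  field_simp
  ring

lemma Yv_two : Yv 2 = 1 - 1 / π := by
  unfold Yv
  rw [cos_tc_succ 1, tc_one, Real.cos_pi_div_two, Real.sin_pi_div_two]
  ring

lemma Yv_one_le (d : ℕ) (hd : 1 ≤ d) : Yv d ≤ 1 := by
  have h := tc_prop d hd
  have : 0 ≤ Real.cos (thetaCheck d) :=
    Real.cos_nonneg_of_mem_Icc ⟨by linarith [Real.pi_pos, h.1], h.2⟩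
  unfold Yv; linarith

lemma Yv_antitone (d : ℕ) (hd : 1 ≤ d) : Yv (d + 1) ≤ Yv d := by
  have h := tc_prop d hd
  have hdl := delta_lb h.1 h.2
  have hπ : (0:ℝ) < π := Real.pi_pos
  rw [Yv_succ d]
  have : 0 ≤ (Real.sin (thetaCheck d) - thetaCheck d * Real.cos (thetaCheck d)) / π := by
    apply div_nonneg _ hπ.le
    nlinarith [pow_pos h.1 3]
  linarith

lemma Yv_le (d : ℕ) (hd : 2 ≤ d) : Yv d ≤ 1 - 1 / π := by
  induction d, hd using Nat.le_induction with
  | base => rw [Yv_two]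
  | succ n hn ih => exact (Yv_antitone n (by omega)).trans ih

/-- Step upper bound: `Y_{d+1} ≤ Y_d - 0.13 Y_d √(Y_d)` for `d ≥ 1`. -/
lemma step_high (d : ℕ) (hd : 1 ≤ d) :
    Yv (d + 1) ≤ Yv d - 13 / 100 * (Yv d * Real.sqrt (Yv d)) := by
  have h := tc_prop d hd
  set θ := thetaCheck d with hθ
  have hy : Yv d = 1 - Real.cos θ := rfl
  set s := Real.sqrt (Yv d) with hs
  have hs0 : 0 ≤ s := Real.sqrt_nonneg _
  have hs2 : s ^ 2 = Yv d := Real.sq_sqrt (Yv_nonneg d)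
  have hyub : Yv d ≤ θ ^ 2 / 2 := by rw [hy]; exact y_ub θ
  -- θ ≥ 1.41 s
  have hθs : 141 / 100 * s ≤ θ := by
    have h1 : (141 / 100 * s) ^ 2 ≤ θ ^ 2 := by nlinarith
    nlinarith [sq_nonneg (θ - 141 / 100 * s)]
  have hcube : (141 / 100) ^ 3 * s ^ 3 ≤ θ ^ 3 := by
    have := pow_le_pow_left₀ (by positivity : (0:ℝ) ≤ 141 / 100 * s) hθs 3
    nlinarith [this]
  have hπ : (0:ℝ) < π := Real.pi_pos
  have hπ2 : π < 3.15 := Real.pi_lt_d2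
  have hdl := delta_lb h.1 h.2
  rw [Yv_succ d]
  have hΔ : 13 / 100 * (Yv d * s) ≤
      (Real.sin θ - θ * Real.cos θ) / π := by
    rw [le_div_iff₀ hπ]
    have hYs : Yv d * s = s ^ 3 := by rw [← hs2]; ring
    rw [hYs]
    nlinarith [pow_pos h.1 3, mul_nonneg (mul_nonneg hs0 hs0) hs0]
  linarith

/-- Step lower bound: `Y_{d+1} ≥ Y_d - 0.78 Y_d √(Y_d)` for `d ≥ 1`. -/
lemma step_low (d : ℕ) (hd : 1 ≤ d) :
    Yv d - 78 / 100 * (Yv d * Real.sqrt (Yv d)) ≤ Yv (d + 1) := by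
  have h := tc_prop d hd
  set θ := thetaCheck d with hθ
  have hy : Yv d = 1 - Real.cos θ := rfl
  set s := Real.sqrt (Yv d) with hs
  have hs0 : 0 ≤ s := Real.sqrt_nonneg _
  have hs2 : s ^ 2 = Yv d := Real.sq_sqrt (Yv_nonneg d)
  have hylb : 7 / 20 * θ ^ 2 ≤ Yv d := by rw [hy]; exact y_lb h.1 h.2
  -- θ ≤ (100/59) s
  have hθs : θ ≤ 100 / 59 * s := by
    have h1 : θ ^ 2 ≤ (100 / 59 * s) ^ 2 := by nlinarith
    nlinarith [sq_nonneg (100 / 59 * s - θ), h.1]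
  have hcube : θ ^ 3 ≤ (100 / 59) ^ 3 * s ^ 3 := by
    have := pow_le_pow_left₀ h.1.le hθs 3
    nlinarith [this]
  have hπ : (0:ℝ) < π := Real.pi_pos
  have hπ2 : (3.141592:ℝ) < π := Real.pi_gt_d6
  have hdu := delta_ub h.1.le
  rw [Yv_succ d]
  have hΔ : (Real.sin θ - θ * Real.cos θ) / π ≤ 78 / 100 * (Yv d * s) := by
    rw [div_le_iff₀ hπ]
    have hYs : Yv d * s = s ^ 3 := by rw [← hs2]; ring
    rw [hYs]
    nlinarith [pow_pos h.1 3, mul_nonneg (mul_nonneg hs0 hs0) hs0]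
  linarith

/-- Monotonicity of `y ↦ y - c y √y` on `[0, M²]` when `3 c M ≤ 2`. -/
lemma cube_mono {c M a y : ℝ} (hc : 0 ≤ c) (hM : 0 ≤ M) (hcM : 3 * c * M ≤ 2)
    (ha : 0 ≤ a) (hay : a ≤ y) (hyM : y ≤ M ^ 2) :
    a - c * (a * Real.sqrt a) ≤ y - c * (y * Real.sqrt y) := by
  set σ := Real.sqrt a with hσ
  set s := Real.sqrt y with hs
  have hσ0 : 0 ≤ σ := Real.sqrt_nonneg _
  have hs0 : 0 ≤ s := Real.sqrt_nonneg _
  have hσ2 : σ ^ 2 = a := Real.sq_sqrt ha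
  have hs2 : s ^ 2 = y := Real.sq_sqrt (ha.trans hay)
  have hσs : σ ≤ s := Real.sqrt_le_sqrt hay
  have hsM : s ≤ M := by
    have : s ^ 2 ≤ M ^ 2 := by rw [hs2]; exact hyM
    nlinarith
  have hσM : σ ≤ M := hσs.trans hsM
  have hinner : 0 ≤ (s + σ) - c * (s ^ 2 + s * σ + σ ^ 2) := by
    have h1 : s ^ 2 + s * σ + σ ^ 2 ≤ 3 / 2 * (M * (s + σ)) := by
      nlinarith [sq_nonneg (s - σ), mul_nonneg hσ0 (sub_nonneg.2 hσM),
        mul_nonneg hs0 (sub_nonneg.2 hsM)]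
    have h2 : c * (s ^ 2 + s * σ + σ ^ 2) ≤ c * (3 / 2 * (M * (s + σ))) :=
      mul_le_mul_of_nonneg_left h1 hc
    nlinarith [mul_nonneg (add_nonneg hs0 hσ0) (sub_nonneg.2 hcM)]
  have hkey : 0 ≤ (s - σ) * ((s + σ) - c * (s ^ 2 + s * σ + σ ^ 2)) :=
    mul_nonneg (by linarith) hinner
  have hgoal : σ ^ 2 - c * (σ ^ 2 * σ) ≤ s ^ 2 - c * (s ^ 2 * s) := by nlinarith [hkey]
  rw [← hσ2, ← hs2]
  exact hgoal

lemma Yv_lb : ∀ d : ℕ, 2 ≤ d → 1 / ((d : ℝ) + 2) ^ 2 ≤ Yv d := by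
  intro d hd
  induction d, hd using Nat.le_induction with
  | base =>
      rw [Yv_two]
      have h3 : (3:ℝ) < π := Real.pi_gt_three
      have hπ : (0:ℝ) < π := Real.pi_pos
      have h13 : 1 / π ≤ 1 / 3 := by
        rw [div_le_div_iff₀ hπ (by norm_num)]
        linarith
      have hc : ((2:ℕ):ℝ) + 2 = 4 := by norm_num
      rw [hc]
      nlinarith [h13]
  | succ n hn ih =>
      have hπ4 : π < 3.1416 := Real.pi_lt_d4
      have hY682 : Yv n ≤ 682 / 1000 := by
        have h1 := Yv_le n hn
        have hπ : (0:ℝ) < π := Real.pi_pos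
        have : 1 / 3.1416 < 1 / π := by
          apply div_lt_div_of_pos_left (by norm_num) hπ hπ4
        nlinarith
      have hu : (4:ℝ) ≤ (n : ℝ) + 2 := by
        have : (2:ℝ) ≤ (n : ℝ) := by exact_mod_cast hn
        linarith
      have hu0 : (0:ℝ) < (n : ℝ) + 2 := by linarith
      set u : ℝ := (n : ℝ) + 2 with hu_def
      have ha : (0:ℝ) ≤ 1 / u ^ 2 := by positivity
      have hsq : Real.sqrt (1 / u ^ 2) = 1 / u := by
        rw [show 1 / u ^ 2 = (1 / u) ^ 2 by rw [div_pow]; norm_num, Real.sqrt_sq (by positivity)]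
      have hmono := cube_mono (c := 78 / 100) (M := 826 / 1000) (by norm_num) (by norm_num)
        (by norm_num) ha ih (by nlinarith [hY682])
      have hstep := step_low n (by omega)
      have hlast : 1 / (u + 1) ^ 2 ≤ 1 / u ^ 2 - 78 / 100 * (1 / u ^ 2 * (1 / u)) := by
        have h1 : 1 / u ^ 2 - 78 / 100 * (1 / u ^ 2 * (1 / u)) = (u - 78 / 100) / u ^ 3 := by
          field_simp
        rw [h1, div_le_div_iff₀ (by positivity) (by positivity)]
        nlinarith
      rw [hsq] at hmono
      have hcast : ((n + 1 : ℕ) : ℝ) + 2 = u + 1 := by push_cast [hu_def]; ring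
      rw [hcast]
      linarith

lemma Yv_ub : ∀ d : ℕ, 15 ≤ d → Yv d ≤ 256 / ((d : ℝ) + 1) ^ 2 := by
  intro d hd
  induction d, hd using Nat.le_induction with
  | base =>
      have := Yv_one_le 15 (by norm_num)
      norm_num
      linarith
  | succ n hn ih =>
      have hu : (16:ℝ) ≤ (n : ℝ) + 1 := by
        have : (15:ℝ) ≤ (n : ℝ) := by exact_mod_cast hn
        linarith
      set u : ℝ := (n : ℝ) + 1 with hu_def
      have hu0 : (0:ℝ) < u := by linarith
      have hb1 : 256 / u ^ 2 ≤ 1 := by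
        rw [div_le_one (by positivity)]
        nlinarith
      have hsq : Real.sqrt (256 / u ^ 2) = 16 / u := by
        rw [show 256 / u ^ 2 = (16 / u) ^ 2 by rw [div_pow]; norm_num, Real.sqrt_sq (by positivity)]
      have hmono := cube_mono (c := 13 / 100) (M := 1) (by norm_num) (by norm_num)
        (by norm_num) (Yv_nonneg n) ih (by nlinarith [hb1])
      have hstep := step_high n (by omega)
      have hlast : 256 / u ^ 2 - 13 / 100 * (256 / u ^ 2 * (16 / u)) ≤ 256 / (u + 1) ^ 2 := by
        have h1 : 256 / u ^ 2 - 13 / 100 * (256 / u ^ 2 * (16 / u)) =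
            (256 * u - 53248 / 100) / u ^ 3 := by
          field_simp; ring
        rw [h1, div_le_div_iff₀ (by positivity) (by positivity)]
        nlinarith
      rw [hsq] at hmono
      have hcast : ((n + 1 : ℕ) : ℝ) + 1 = u + 1 := by push_cast [hu_def]; ring
      rw [hcast]
      linarith

lemma one_sub_rho (d : ℕ) (hd : 1 ≤ d) : 1 - rho d = Yv d := by
  rw [rho_eq_cos d hd]; rfl

theorem statement_12 :
    (∃ a7 : ℝ, 0 < a7 ∧ ∀ d : ℕ, 2 ≤ d →
      1 / (a7 * ((d : ℝ) + 2) ^ 2) ≤ 1 - rho d ∧ 1 - rho d ≤ 250 / ((d : ℝ) + 1))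
    ∧ 0 < ⨅ d : {d : ℕ // 2 ≤ d}, rho d := by
  have hπ : (0:ℝ) < π := Real.pi_pos
  constructor
  · refine ⟨1, one_pos, fun d hd => ?_⟩
    have h1r : 1 - rho d = Yv d := one_sub_rho d (by omega)
    constructor
    · rw [h1r, one_mul]
      exact Yv_lb d hd
    · rw [h1r]
      rcases le_or_gt 15 d with h15 | h15
      · have h := Yv_ub d h15
        have hu : (16:ℝ) ≤ (d : ℝ) + 1 := by
          have : (15:ℝ) ≤ (d : ℝ) := by exact_mod_cast h15
          linarith
        have : 256 / ((d : ℝ) + 1) ^ 2 ≤ 250 / ((d : ℝ) + 1) := by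
          rw [div_le_div_iff₀ (by positivity) (by positivity)]
          nlinarith
        linarith
      · have h := Yv_one_le d (by omega)
        have hu : (1:ℝ) ≤ (d : ℝ) + 1 := by
          have : (0:ℝ) ≤ (d : ℝ) := Nat.cast_nonneg d
          linarith
        have hu2 : (d : ℝ) + 1 ≤ 15 := by
          have : (d : ℝ) ≤ 14 := by exact_mod_cast Nat.le_of_lt_succ h15
          linarith
        have : (1:ℝ) ≤ 250 / ((d : ℝ) + 1) := by
          rw [le_div_iff₀ (by positivity)]
          linarith
        linarith
  · have hlb : ∀ x : {d : ℕ // 2 ≤ d}, 1 / π ≤ rho x.1 := by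
      rintro ⟨d, hd⟩
      have h1 := Yv_le d hd
      have h2 : 1 - rho d = Yv d := one_sub_rho d (by omega)
      simp only
      linarith
    have h := le_ciInf hlb
    have h0 : (0:ℝ) < 1 / π := by positivity
    calc (0:ℝ) < 1 / π := h0
    _ ≤ _ := h

end CSGen
end
end
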